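/- Define c : 3^{<ℕ} → 2^{<ℕ} by c(∅) = ∅, and letterwise by 0 ↦ 00, 1 ↦ 01, 2 ↦ 10, concatenated. For a tree T on 3, let C(T) be the downward closure of c[T] in 2^{<ℕ}. Then for infinite trees T, S on 3 of the form T_A (containing all of 2^{<ℕ}, with 2's only at leaves), C(T) = C(S)_w for some w ∈ 2^{<ℕ} implies w is in the image of c, say w = c(u), and T = S_u. Conversely T = S_u implies C(T) = C(S)_{c(u)}. Hence T ↦ C(T) reduces the subtree quasi-order on trees on 3 of this form to the subtree quasi-order on trees on 2. -/

import Mathlib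

/-- The letterwise coding `c : 3^{<ℕ} → 2^{<ℕ}`, `0 ↦ 00`, `1 ↦ 01`, `2 ↦ 10`. -/
def cCode (s : List (Fin 3)) : List (Fin 2) :=
  s.flatMap (fun i => if i = 0 then [0, 0] else if i = 1 then [0, 1] else [1, 0])

/-- `C(T)`: the downward closure of `c[T]` in `2^{<ℕ}`. -/
def Ctree (T : Set (List (Fin 3))) : Set (List (Fin 2)) :=
  {s | ∃ u ∈ T, s <+: cCode u}

/-- Trees on `3` of the form `T_A`: trees (prefix-closed sets) containing all of
`2^{<ℕ}` (hence infinite), in which the letter `2` occurs only as a final entry. -/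
def GoodTree (T : Set (List (Fin 3))) : Prop :=
  (∀ u v : List (Fin 3), u <+: v → v ∈ T → u ∈ T) ∧
  ({s | ∀ x ∈ s, x ≠ 2} ⊆ T) ∧
  (∀ s ∈ T, (2 : Fin 3) ∈ s → ∃ t, s = t ++ [2] ∧ (2 : Fin 3) ∉ t) ∧
  T.Infinite

namespace X
def blk (x : Fin 3) : List (Fin 2) := if x = 0 then [0, 0] else if x = 1 then [0, 1] else [1, 0]

lemma cCode_def (s : List (Fin 3)) : cCode s = s.flatMap blk := rfl
lemma cCode_nil : cCode [] = [] := rfl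
lemma cCode_cons (x : Fin 3) (s : List (Fin 3)) : cCode (x :: s) = blk x ++ cCode s := rfl
lemma cCode_append (a b : List (Fin 3)) : cCode (a ++ b) = cCode a ++ cCode b := by
  simp [cCode_def, List.flatMap_append]
lemma blk_length (x : Fin 3) : (blk x).length = 2 := by fin_cases x <;> rfl
lemma cCode_length (s : List (Fin 3)) : (cCode s).length = 2 * s.length := by
  induction s with
  | nil => rfl
  | cons x s ih => simp [cCode_cons, blk_length, ih]; omega

lemma blk_injective : Function.Injective blk := by decide

lemma cCode_injective : Function.Injective cCode := by
  intro a b h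
  induction a generalizing b with
  | nil =>
    cases b with
    | nil => rfl
    | cons y b =>
      have := congrArg List.length h
      simp [cCode_nil, cCode_cons, blk_length] at this; omega
  | cons x a ih =>
    cases b with
    | nil =>
      have := congrArg List.length h
      simp [cCode_nil, cCode_cons, blk_length] at this
    | cons y b =>
      rw [cCode_cons, cCode_cons] at h
      have hl : (blk x).length = (blk y).length := by rw [blk_length, blk_length]
      obtain ⟨h1, h2⟩ := List.append_inj h hl
      rw [blk_injective h1, ih h2]

lemma prefix_split {α : Type*} {w a b : List α} (h : w <+: a ++ b) (hl : a.length ≤ w.length) :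
    ∃ w', w = a ++ w' ∧ w' <+: b := by
  obtain ⟨t, ht⟩ := h
  rcases List.append_eq_append_iff.mp ht with ⟨a', h1, h2⟩ | ⟨c', h1, h2⟩
  · have : a' = [] := by
      have := congrArg List.length h1
      simp at this
      cases a' with
      | nil => rfl
      | cons z l => simp at this; omega
    subst this
    exact ⟨[], by simp [h1], ⟨b, rfl⟩⟩
  · exact ⟨c', h1, ⟨t, h2.symm⟩⟩

lemma decodeEven : ∀ (s : List (Fin 3)) (k : ℕ) (w : List (Fin 2)),
    w <+: cCode s → w.length = 2 * k → ∃ u r, s = u ++ r ∧ u.length = k ∧ w = cCode u := by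
  intro s
  induction s with
  | nil =>
    intro k w hp hl
    have : w = [] := List.prefix_nil.mp hp
    subst this
    refine ⟨[], [], rfl, ?_, rfl⟩
    simp at hl ⊢; omega
  | cons x s ih =>
    intro k w hp hl
    cases k with
    | zero =>
      have : w = [] := List.eq_nil_of_length_eq_zero (by omega)
      exact ⟨[], x :: s, rfl, rfl, this⟩
    | succ k =>
      rw [cCode_cons] at hp
      obtain ⟨w', hw', hp'⟩ := prefix_split hp (by rw [blk_length]; omega)
      obtain ⟨u, r, h1, h2, h3⟩ := ih k w' hp' (by
        have := congrArg List.length hw'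
        simp [blk_length] at this; omega)
      exact ⟨x :: u, r, by simp [h1], by simp [h2], by rw [hw', h3, cCode_cons]⟩

lemma decodeOdd : ∀ (s : List (Fin 3)) (k : ℕ) (w : List (Fin 2)),
    w <+: cCode s → w.length = 2 * k + 1 →
    ∃ u x r, s = u ++ x :: r ∧ u.length = k ∧ w = cCode u ++ [if x = 2 then 1 else 0] := by
  intro s
  induction s with
  | nil =>
    intro k w hp hl
    have : w = [] := List.prefix_nil.mp hp
    subst this; simp at hl
  | cons x s ih =>
    intro k w hp hl
    cases k with
    | zero =>
      rw [cCode_cons] at hp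
      obtain ⟨t, ht⟩ := hp
      match w, hl with
      | [a], _ =>
        refine ⟨[], x, s, rfl, rfl, ?_⟩
        fin_cases x <;> simp [blk, cCode_nil] at ht ⊢ <;> simp [ht.1]
    | succ k =>
      rw [cCode_cons] at hp
      obtain ⟨w', hw', hp'⟩ := prefix_split hp (by rw [blk_length]; omega)
      obtain ⟨u, y, r, h1, h2, h3⟩ := ih k w' hp' (by
        have := congrArg List.length hw'
        simp [blk_length] at this; omega)
      exact ⟨x :: u, y, r, by simp [h1], by simp [h2], by rw [hw', h3, cCode_cons]; simp⟩

lemma code_prefix_code {t r : List (Fin 3)} (h : cCode t <+: cCode r) : t <+: r := by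
  obtain ⟨u, s, h1, h2, h3⟩ := decodeEven r t.length (cCode t) h (cCode_length t)
  have : t = u := cCode_injective h3
  exact this ▸ ⟨s, h1.symm⟩

lemma code_mem_Ctree {R : Set (List (Fin 3))}
    (hR : ∀ u v : List (Fin 3), u <+: v → v ∈ R → u ∈ R) (t : List (Fin 3)) :
    cCode t ∈ Ctree R ↔ t ∈ R := by
  constructor
  · rintro ⟨r, hr, hp⟩
    exact hR t r (code_prefix_code hp) hr
  · intro ht
    exact ⟨t, ht, List.prefix_refl _⟩

lemma twoFree_pref {S : Set (List (Fin 3))} (hS : GoodTree S) {u r : List (Fin 3)}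
    (h : u ++ r ∈ S) (hr : r ≠ []) : (2 : Fin 3) ∉ u := by
  intro h2
  obtain ⟨t, ht, h2t⟩ := hS.2.2.1 _ h (List.mem_append.mpr (Or.inl h2))
  have hlen : u.length ≤ t.length := by
    have := congrArg List.length ht
    simp at this
    have : r.length ≥ 1 := List.length_pos_iff.mpr hr
    omega
  have hpre : u <+: t := by
    have h1 : u <+: t ++ [2] := ht ▸ ⟨r, rfl⟩
    obtain ⟨w', hw'⟩ := h1
    rcases List.append_eq_append_iff.mp hw' with ⟨a', ha1, _⟩ | ⟨c', hc1, _⟩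
    · exact ⟨a', ha1.symm⟩
    · have := congrArg List.length hc1
      simp at this
      have : c' = [] := by
        cases c' with
        | nil => rfl
        | cons z l => simp at this; omega
      subst this
      exact ⟨[], by simp [hc1]⟩
  exact h2t (hpre.subset h2)

lemma extend_odd {S : Set (List (Fin 3))} {v : List (Fin 2)}
    (h : v ∈ Ctree S) (hodd : Odd v.length) : ∃ b, v ++ [b] ∈ Ctree S := by
  obtain ⟨s, hs, t, ht⟩ := h
  cases t with
  | nil =>
    exfalso
    have := congrArg List.length ht
    simp [cCode_length] at this
    obtain ⟨m, hm⟩ := hodd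
    omega
  | cons b t' =>
    exact ⟨b, s, hs, ⟨t', by simpa using ht⟩⟩

lemma head_one {t : List (Fin 3)} (h : [(1 : Fin 2)] <+: cCode t) : ∃ r, t = 2 :: r := by
  cases t with
  | nil => simp [cCode_nil] at h
  | cons x t' =>
    refine ⟨t', ?_⟩
    obtain ⟨s, hs⟩ := h
    rw [cCode_cons] at hs
    fin_cases x <;> simp [blk] at hs ⊢

lemma two_cons {T : Set (List (Fin 3))} (hT : GoodTree T) {r : List (Fin 3)}
    (h : 2 :: r ∈ T) : r = [] := by
  obtain ⟨t₂, he, h2⟩ := hT.2.2.1 _ h List.mem_cons_self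
  cases t₂ with
  | nil => simpa using he.symm
  | cons y l =>
    exfalso
    simp at he
    exact h2 (he.1 ▸ List.mem_cons_self)

lemma easy {T S : Set (List (Fin 3))} (u : List (Fin 3)) (hu : T = {v | u ++ v ∈ S}) :
    Ctree T = {v | cCode u ++ v ∈ Ctree S} := by
  ext v
  constructor
  · rintro ⟨t, ht, hp⟩
    rw [hu] at ht
    refine ⟨u ++ t, ht, ?_⟩
    rw [cCode_append]
    obtain ⟨o, ho⟩ := hp
    exact ⟨o, by rw [List.append_assoc, ho]⟩
  · rintro ⟨s', hs', hp⟩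
    have hpre : cCode u <+: cCode s' := (List.prefix_append _ v).trans hp
    obtain ⟨u₀, r, h1, h2, h3⟩ := decodeEven s' u.length (cCode u) hpre (cCode_length u)
    have hu0 : u = u₀ := cCode_injective h3
    subst hu0
    rw [h1, cCode_append] at hp
    have hv : v <+: cCode r := by
      obtain ⟨o, ho⟩ := hp
      rw [List.append_assoc] at ho
      exact ⟨o, List.append_cancel_left ho⟩
    exact ⟨r, by rw [hu]; exact Set.mem_setOf.mpr (h1 ▸ hs'), hv⟩

lemma hard {T S : Set (List (Fin 3))} (hT : GoodTree T) (hS : GoodTree S) (w : List (Fin 2))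
    (hw : Ctree T = {v | w ++ v ∈ Ctree S}) :
    ∃ u, w = cCode u ∧ T = {v | u ++ v ∈ S} := by
  have hmem : ∀ v, v ∈ Ctree T ↔ w ++ v ∈ Ctree S := fun v => by rw [hw]; rfl
  have hTfree : ∀ t : List (Fin 3), (2:Fin 3) ∉ t → t ∈ T := fun t h =>
    hT.2.1 (fun x hx => by rintro rfl; exact h hx)
  have hSfree : ∀ t : List (Fin 3), (2:Fin 3) ∉ t → t ∈ S := fun t h =>
    hS.2.1 (fun x hx => by rintro rfl; exact h hx)
  have hwS : w ∈ Ctree S := by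
    have := (hmem []).mp ⟨[], hTfree [] (by simp), by simp⟩
    simpa using this
  obtain ⟨s, hs, hps⟩ := hwS
  rcases Nat.even_or_odd w.length with he | ho
  · obtain ⟨k, hk⟩ := he
    obtain ⟨u, r, h1, h2, h3⟩ := decodeEven s k w hps (by omega)
    refine ⟨u, h3, ?_⟩
    ext t
    constructor
    · intro ht
      have h4 : cCode t ∈ Ctree T := (code_mem_Ctree hT.1 t).mpr ht
      have h5 : w ++ cCode t ∈ Ctree S := (hmem _).mp h4
      rw [h3, ← cCode_append] at h5
      exact (code_mem_Ctree hS.1 _).mp h5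
    · intro ht
      have h4 : cCode (u ++ t) ∈ Ctree S := (code_mem_Ctree hS.1 _).mpr ht
      rw [cCode_append, ← h3] at h4
      exact (code_mem_Ctree hT.1 t).mp ((hmem _).mpr h4)
  · exfalso
    obtain ⟨k, hk⟩ := ho
    obtain ⟨u, x, r, h1, h2, h3⟩ := decodeOdd s k w hps hk
    by_cases hx : x = (2 : Fin 3)
    · -- w = cCode u ++ [1]
      have hw1 : w = cCode u ++ [1] := by rw [h3, if_pos hx]
      have h00 : ([0,0] : List (Fin 2)) ∈ Ctree T :=
        ⟨[0], hTfree [0] (by decide), by decide⟩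
      have h00S : w ++ [0,0] ∈ Ctree S := (hmem _).mp h00
      obtain ⟨s', hs', hp'⟩ := h00S
      have hpre1 : cCode u ++ [1] <+: cCode s' :=
        (hw1 ▸ (List.prefix_append w [0,0]) : cCode u ++ [1] <+: w ++ [0,0]).trans hp'
      obtain ⟨u', x', r', g1, g2, g3⟩ := decodeOdd s' k _ hpre1
        (by simp [cCode_length, h2])
      have hlen : (cCode u).length = (cCode u').length := by
        rw [cCode_length, cCode_length, h2, g2]
      obtain ⟨e1, e2⟩ := List.append_inj g3 hlen
      have hx' : x' = 2 := by
        by_contra hne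
        rw [if_neg hne] at e2
        simp at e2
      have huu : u = u' := cCode_injective e1
      subst huu; subst hx'
      have hr' : r' = [] := by
        by_contra hne
        exact twoFree_pref hS (show (u ++ [2]) ++ r' ∈ S by
          rw [List.append_assoc]; simpa using g1 ▸ hs') hne (by simp)
      subst hr'
      have hle := hp'.length_le
      have hlens' : s'.length = u.length + 1 := by rw [g1]; simp
      simp [cCode_length, hlens', h2, hw1] at hle
      omega
    · -- w = cCode u ++ [0]
      have hw0 : w = cCode u ++ [0] := by rw [h3, if_neg hx]
      have hufree : (2:Fin 3) ∉ u := twoFree_pref hS (h1 ▸ hs) (by simp)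
      have hu1 : u ++ [1] ∈ S := hSfree _ (by
        intro hm
        rcases List.mem_append.mp hm with h' | h'
        · exact hufree h'
        · simp at h')
      have h1mem : ([1] : List (Fin 2)) ∈ Ctree T := by
        apply (hmem [1]).mpr
        refine ⟨u ++ [1], hu1, ?_⟩
        rw [hw0, cCode_append]
        have : cCode [(1 : Fin 3)] = [0, 1] := by decide
        rw [this, List.append_assoc]
        exact List.prefix_refl _
      obtain ⟨t, ht, hpt⟩ := h1mem
      obtain ⟨r₀, rfl⟩ := head_one hpt
      have hr0 : r₀ = [] := two_cons hT ht
      subst hr0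
      have h10 : ([1,0] : List (Fin 2)) ∈ Ctree T := ⟨[2], ht, by decide⟩
      have h10S : w ++ [1,0] ∈ Ctree S := (hmem _).mp h10
      obtain ⟨b, hb⟩ := extend_odd h10S ⟨k + 1, by simp [hk]; omega⟩
      have h3mem : ([1,0,b] : List (Fin 2)) ∈ Ctree T :=
        (hmem _).mpr (by simpa [List.append_assoc] using hb)
      obtain ⟨t', ht', hpt'⟩ := h3mem
      obtain ⟨r₁, rfl⟩ := head_one ((show [(1:Fin 2)] <+: [1,0,b] from ⟨[0,b], rfl⟩).trans hpt')
      have hr1 : r₁ = [] := two_cons hT ht'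
      subst hr1
      have hle := hpt'.length_le
      simp [cCode_length] at hle

end X

/-- `T ↦ C(T)` reduces the subtree quasi-order on trees on `3` of the form `T_A` to the
subtree quasi-order on trees on `2`: if `C(T) = C(S)_w` then `w = c(u)` for some `u` and
`T = S_u`; conversely `T = S_u` implies `C(T) = C(S)_{c(u)}`. -/
theorem Ctree_reduction (T S : Set (List (Fin 3)))
    (hT : GoodTree T) (hS : GoodTree S) :
    (∀ w : List (Fin 2), Ctree T = {v | w ++ v ∈ Ctree S} →
      ∃ u : List (Fin 3), w = cCode u ∧ T = {v | u ++ v ∈ S}) ∧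
    (∀ u : List (Fin 3), T = {v | u ++ v ∈ S} →
      Ctree T = {v | cCode u ++ v ∈ Ctree S}) :=
  ⟨fun w hw => X.hard hT hS w hw, fun u hu => X.easy u hu⟩
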